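/- Let v_1, …, v_n be unit vectors in ℝ^d (d ≥ 2) and c_1, …, c_n real numbers, and suppose the set K = ∩_{i=1}^n {x ∈ ℝ^d : ⟨v_i, x⟩ ≥ c_i} is nonempty. Then K is nearly bounded (lies between two parallel hyperplanes) if and only if the origin belongs to the convex hull of {v_1, …, v_n}. -/

import Mathlib

open scoped RealInnerProductSpace

noncomputable section

/-- A set is nearly bounded if it lies between two parallel hyperplanes. -/
def NearlyBounded {d : ℕ} (S : Set (EuclideanSpace ℝ (Fin d))) : Prop :=
  ∃ u : EuclideanSpace ℝ (Fin d), ‖u‖ = 1 ∧ ∃ a b : ℝ,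
    a ≤ b ∧ ∀ x ∈ S, a ≤ ⟪u, x⟫ ∧ ⟪u, x⟫ ≤ b

/-- If the recession cone of the halfspace system contains a direction `z` whose inner
product with `u` is positive, then `⟪u, ·⟫` is unbounded above on the feasible set. -/
lemma ray_unbounded {d n : ℕ} (v : Fin n → EuclideanSpace ℝ (Fin d)) (c : Fin n → ℝ)
    (u z x₀ : EuclideanSpace ℝ (Fin d)) (hx₀ : ∀ i, c i ≤ ⟪v i, x₀⟫)
    (hz : ∀ i, 0 ≤ ⟪v i, z⟫) (hδ : 0 < ⟪u, z⟫) (b : ℝ) :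
    ∃ x, (∀ i, c i ≤ ⟪v i, x⟫) ∧ b < ⟪u, x⟫ := by
  set t := max 0 ((b + 1 - ⟪u, x₀⟫) / ⟪u, z⟫) with ht
  have ht0 : 0 ≤ t := le_max_left _ _
  refine ⟨x₀ + t • z, ?_, ?_⟩
  · intro i
    rw [inner_add_right, real_inner_smul_right]
    nlinarith [hz i, hx₀ i]
  · rw [inner_add_right, real_inner_smul_right]
    have h1 : (b + 1 - ⟪u, x₀⟫) / ⟪u, z⟫ ≤ t := le_max_right _ _
    have h2 := (div_le_iff₀ hδ).1 h1
    nlinarith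

/-- A nonempty intersection of closed halfspaces with unit inward normals `v i` is nearly
bounded if and only if the origin belongs to the convex hull of the `v i`. -/
theorem nearlyBounded_iff_origin_mem_convexHull
    {d n : ℕ} (hd : 2 ≤ d) (v : Fin n → EuclideanSpace ℝ (Fin d)) (hv : ∀ i, ‖v i‖ = 1)
    (c : Fin n → ℝ) (K : Set (EuclideanSpace ℝ (Fin d)))
    (hK : K = ⋂ i, {x : EuclideanSpace ℝ (Fin d) | c i ≤ ⟪v i, x⟫})
    (hne : K.Nonempty) :
    NearlyBounded K ↔ (0 : EuclideanSpace ℝ (Fin d)) ∈ convexHull ℝ (Set.range v) := by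
  have hKmem : ∀ x, x ∈ K ↔ ∀ i, c i ≤ ⟪v i, x⟫ := by
    intro x; rw [hK]; simp [Set.mem_iInter]
  obtain ⟨x₀, hx₀⟩ := hne
  have hx₀' : ∀ i, c i ≤ ⟪v i, x₀⟫ := (hKmem x₀).1 hx₀
  constructor
  · intro hNB
    by_contra h0
    obtain ⟨f, r, hfs, hr0⟩ := geometric_hahn_banach_closed_point
      (convex_convexHull ℝ _) ((Set.finite_range v).isCompact_convexHull (𝕜 := ℝ)).isClosed h0
    rw [map_zero] at hr0
    obtain ⟨w, hwf⟩ : ∃ w : EuclideanSpace ℝ (Fin d), ∀ x, ⟪w, x⟫ = -(f x) :=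
      ⟨-((InnerProductSpace.toDual ℝ (EuclideanSpace ℝ (Fin d))).symm f), fun x => by
        rw [inner_neg_left, InnerProductSpace.toDual_symm_apply]⟩
    set ε : ℝ := -r with hε
    have hε0 : 0 < ε := by simp [hε]; linarith
    have hvw : ∀ i, ε ≤ ⟪v i, w⟫ := by
      intro i
      have hfi : f (v i) < r := hfs _ (subset_convexHull ℝ _ (Set.mem_range_self i))
      rw [real_inner_comm, hwf]
      linarith
    obtain ⟨u, hu, a, b, hab, hbound⟩ := hNB
    have huu : ⟪u, u⟫ = 1 := by
      rw [real_inner_self_eq_norm_sq, hu]; norm_num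
    have hCS : ∀ i : Fin n, |⟪v i, u⟫| ≤ 1 := by
      intro i
      calc |⟪v i, u⟫| ≤ ‖v i‖ * ‖u‖ := abs_real_inner_le_norm _ _
        _ = 1 := by rw [hv i, hu]; ring
    rcases le_or_gt 0 ⟪u, w⟫ with h | h
    · obtain ⟨x, hxK, hxb⟩ := ray_unbounded v c u (w + (ε/2) • u) x₀ hx₀'
        (fun i => by
          rw [inner_add_right, real_inner_smul_right]
          have := abs_le.1 (hCS i)
          nlinarith [hvw i])
        (by rw [inner_add_right, real_inner_smul_right, huu]; nlinarith) b
      exact absurd (hbound x ((hKmem x).2 hxK)).2 (not_le.2 hxb)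
    · obtain ⟨x, hxK, hxb⟩ := ray_unbounded v c (-u) (w + (ε/2) • (-u)) x₀ hx₀'
        (fun i => by
          rw [inner_add_right, real_inner_smul_right, inner_neg_right]
          have := abs_le.1 (hCS i)
          nlinarith [hvw i])
        (by
          rw [inner_neg_left, inner_add_right, real_inner_smul_right, inner_neg_right, huu]
          nlinarith) (-a)
      rw [inner_neg_left] at hxb
      exact absurd (hbound x ((hKmem x).2 hxK)).1 (not_le.2 (by linarith))
  · intro h0
    rw [convexHull_range_eq_exists_affineCombination] at h0
    obtain ⟨s, w, hw0, hw1, hwv⟩ := h0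
    rw [Finset.affineCombination_eq_linear_combination s v w hw1] at hwv
    obtain ⟨j, hjs, hj⟩ : ∃ j ∈ s, 0 < w j := by
      by_contra hc
      push_neg at hc
      have : Finset.sum s w ≤ 0 := Finset.sum_nonpos fun i hi => hc i hi
      linarith
    have key : ∀ x, (∀ i, c i ≤ ⟪v i, x⟫) →
        w j * (⟪v j, x⟫ - c j) ≤ -(∑ i ∈ s, w i * c i) := by
      intro x hx
      have h2 : ∑ i ∈ s, w i * ⟪v i, x⟫ = 0 := by
        have h3 : ⟪∑ i ∈ s, w i • v i, x⟫ = (0 : ℝ) := by rw [hwv, inner_zero_left]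
        rw [← h3, sum_inner]
        exact Finset.sum_congr rfl fun i _ => (real_inner_smul_left _ _ _).symm
      have h1 : ∑ i ∈ s, w i * (⟪v i, x⟫ - c i) = -(∑ i ∈ s, w i * c i) := by
        calc ∑ i ∈ s, w i * (⟪v i, x⟫ - c i)
            = ∑ i ∈ s, w i * ⟪v i, x⟫ - ∑ i ∈ s, w i * c i := by
              rw [← Finset.sum_sub_distrib]
              exact Finset.sum_congr rfl fun i _ => by ring
          _ = -(∑ i ∈ s, w i * c i) := by rw [h2]; ring
      rw [← h1]
      exact Finset.single_le_sum (f := fun i => w i * (⟪v i, x⟫ - c i))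
        (fun i hi => mul_nonneg (hw0 i hi) (by linarith [hx i])) hjs
    set B := -(∑ i ∈ s, w i * c i) with hB
    refine ⟨v j, hv j, c j, c j + B / w j, ?_, ?_⟩
    · have hk := key x₀ hx₀'
      have hB0 : 0 ≤ B / w j := (le_div_iff₀ hj).2 (by nlinarith [hx₀' j])
      linarith
    · intro x hx
      have hx' := (hKmem x).1 hx
      refine ⟨hx' j, ?_⟩
      have hk := key x hx'
      have := (le_div_iff₀ hj).2 (by linarith : (⟪v j, x⟫ - c j) * w j ≤ B)
      linarith
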